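/- The system ẋ1 = x2, ẋ2 = f + b·u, ẋ3 = x4, ẋ4 = (f+b·u)/k with k ≠ 0 cannot be asymptotically stabilized to the origin from any initial state with x1(0) − k·x3(0) ≠ 0: for every control function u, the solution satisfies ¬(x1(t) → 0 ∧ x3(t) → 0 as t → ∞). -/

import Mathlib

lemma const_of_deriv_zero_on (g : ℝ → ℝ) (hg : Differentiable ℝ g)
    (h : ∀ t : ℝ, 0 ≤ t → deriv g t = 0) : ∀ t : ℝ, 0 ≤ t → g t = g 0 := by
  intro t ht
  exact constant_of_has_deriv_right_zero (hg.continuous.continuousOn)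
    (fun x hx => by
      have := (hg x).hasDerivAt
      rw [h x hx.1] at this
      exact this.hasDerivWithinAt) t (Set.mem_Icc.mpr ⟨ht, le_refl t⟩)

theorem stmt_2 (x1 x2 x3 x4 : ℝ → ℝ) (u f b : ℝ → ℝ) (k : ℝ) (hk : k ≠ 0)
    (hd1 : Differentiable ℝ x1) (hd2 : Differentiable ℝ x2)
    (hd3 : Differentiable ℝ x3) (hd4 : Differentiable ℝ x4)
    (he1 : ∀ t : ℝ, 0 ≤ t → deriv x1 t = x2 t)
    (he2 : ∀ t : ℝ, 0 ≤ t → deriv x2 t = f t + b t * u t)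
    (he3 : ∀ t : ℝ, 0 ≤ t → deriv x3 t = x4 t)
    (he4 : ∀ t : ℝ, 0 ≤ t → deriv x4 t = (f t + b t * u t) / k)
    (hi2 : x2 0 = k * x4 0) (hi1 : x1 0 - k * x3 0 ≠ 0) :
    ¬(Filter.Tendsto x1 Filter.atTop (nhds 0) ∧
      Filter.Tendsto x3 Filter.atTop (nhds 0)) := by
  rintro ⟨h1, h3⟩
  set v : ℝ → ℝ := fun t => x2 t - k * x4 t with hv
  set w : ℝ → ℝ := fun t => x1 t - k * x3 t with hw
  have hdv : Differentiable ℝ v := hd2.sub (hd4.const_mul k)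
  have hdw : Differentiable ℝ w := hd1.sub (hd3.const_mul k)
  have hvz : ∀ t : ℝ, 0 ≤ t → v t = 0 := by
    have hc := const_of_deriv_zero_on v hdv (fun t ht => by
      have : HasDerivAt v (deriv x2 t - k * deriv x4 t) t :=
        (hd2 t).hasDerivAt.sub ((hd4 t).hasDerivAt.const_mul k)
      rw [this.deriv, he2 t ht, he4 t ht]
      field_simp
      ring)
    intro t ht
    rw [hc t ht]
    simp [hv, hi2]
  have hwc : ∀ t : ℝ, 0 ≤ t → w t = w 0 := by
    apply const_of_deriv_zero_on w hdw
    intro t ht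
    have : HasDerivAt w (deriv x1 t - k * deriv x3 t) t :=
      (hd1 t).hasDerivAt.sub ((hd3 t).hasDerivAt.const_mul k)
    rw [this.deriv, he1 t ht, he3 t ht]
    exact hvz t ht
  have hlim : Filter.Tendsto w Filter.atTop (nhds 0) := by
    have := h1.sub (h3.const_mul k)
    simpa using this
  have : Filter.Tendsto (fun _ : ℝ => w 0) Filter.atTop (nhds 0) := by
    apply hlim.congr'
    filter_upwards [Filter.eventually_ge_atTop (0:ℝ)] with t ht
    exact hwc t ht
  have h0 : w 0 = 0 := tendsto_nhds_unique tendsto_const_nhds this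
  exact hi1 h0
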